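/- Let m ≥ 2, λ₁, …, λ_{m−1} ≥ 0, σ > 0, T ≥ 0, let H = {v ∈ ℝ^m : v_m < 0}, and let L be the MB-Laplacian defined by (1/2)(LΦ)(v) = (Σ_{i<m} λᵢ vᵢ² + T)[(1/v_m − v_m/σ²) Φ_m(v) + Φ_{mm}(v)] + Σ_{i<m} λᵢ( −2 vᵢ Φᵢ(v) + v_m² Φᵢᵢ(v) − 2 vᵢ v_m Φ_{im}(v) ) − (Σ_{i<m} λᵢ − σ^{-2} Σ_{i<m} λᵢ vᵢ²) v_m Φ_m(v), where subscripts denote partial derivatives. Then for the function Φ(v) = ‖v‖² one has (LΦ)(v) = 8T − 4T v_m²/σ² for every v ∈ H. Consequently, L‖v‖² vanishes identically on H if and only if T = 0. -/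

import Mathlib

open Finset

/-- Partial derivative in the `i`-th coordinate direction. -/
noncomputable def pD {N : ℕ} (i : Fin N) (f : EuclideanSpace ℝ (Fin N) → ℝ) :
    EuclideanSpace ℝ (Fin N) → ℝ :=
  fun v => fderiv ℝ f v (EuclideanSpace.single i 1)

/-- The MB-Laplacian on the lower half-space of `ℝ^{n+1}`, in coordinates
adapted to the eigenvectors of `Λ` (with eigenvalues `lam i`), with temperature
parameter `σ²` and `T = Tr(CΛ)`. -/
noncomputable def MBLap (n : ℕ) (lam : Fin n → ℝ) (σ T : ℝ)
    (Φ : EuclideanSpace ℝ (Fin (n + 1)) → ℝ) :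
    EuclideanSpace ℝ (Fin (n + 1)) → ℝ :=
  fun v =>
    2 * (((∑ i : Fin n, lam i * v i.castSucc ^ 2) + T) *
          ((1 / v (Fin.last n) - v (Fin.last n) / σ ^ 2) * pD (Fin.last n) Φ v
            + pD (Fin.last n) (pD (Fin.last n) Φ) v)
        + (∑ i : Fin n, lam i *
            (-2 * v i.castSucc * pD i.castSucc Φ v
              + v (Fin.last n) ^ 2 * pD i.castSucc (pD i.castSucc Φ) v
              - 2 * v i.castSucc * v (Fin.last n) * pD i.castSucc (pD (Fin.last n) Φ) v))
        - ((∑ i : Fin n, lam i)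
              - σ ^ (-2 : ℤ) * ∑ i : Fin n, lam i * v i.castSucc ^ 2)
            * v (Fin.last n) * pD (Fin.last n) Φ v)


lemma pD_normsq {N : ℕ} (i : Fin N) (v : EuclideanSpace ℝ (Fin N)) :
    pD i (fun u : EuclideanSpace ℝ (Fin N) => ‖u‖ ^ 2) v = 2 * v i := by
  have h := (hasStrictFDerivAt_norm_sq v).hasFDerivAt
  unfold pD
  rw [h.fderiv]
  simp [real_inner_comm, EuclideanSpace.inner_single_left, EuclideanSpace.inner_single_right]

lemma pD_coord {N : ℕ} (i j : Fin N) (v : EuclideanSpace ℝ (Fin N)) :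
    pD j (fun u : EuclideanSpace ℝ (Fin N) => 2 * u i) v
      = if j = i then 2 else 0 := by
  have h : HasFDerivAt (fun u : EuclideanSpace ℝ (Fin N) => 2 * u i)
      ((2 : ℝ) • (EuclideanSpace.proj i (𝕜 := ℝ) : EuclideanSpace ℝ (Fin N) →L[ℝ] ℝ)) v := by
    simpa [Pi.smul_def, smul_eq_mul] using ((EuclideanSpace.proj i (𝕜 := ℝ) :
      EuclideanSpace ℝ (Fin N) →L[ℝ] ℝ).hasFDerivAt (x := v)).const_smul (2 : ℝ)
  unfold pD
  rw [h.fderiv]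
  simp [EuclideanSpace.single_apply, eq_comm]

/-- the MB-Laplacian applied to `‖v‖²` equals
`8T − 4T v_m²/σ²` on the lower half-space `H = {v : v_m < 0}`; consequently
`L‖v‖²` vanishes identically on `H` if and only if `T = 0`
(here `m = n + 1`, `n ≥ 1`). -/
theorem stmt_16 (n : ℕ) (hn : 1 ≤ n) (lam : Fin n → ℝ) (hlam : ∀ i, 0 ≤ lam i)
    (σ T : ℝ) (hσ : 0 < σ) (hT : 0 ≤ T)
    (H : Set (EuclideanSpace ℝ (Fin (n + 1))))
    (hH : H = {v : EuclideanSpace ℝ (Fin (n + 1)) | v (Fin.last n) < 0}) :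
    (∀ v ∈ H, MBLap n lam σ T (fun u => ‖u‖ ^ 2) v
        = 8 * T - 4 * T * v (Fin.last n) ^ 2 / σ ^ 2) ∧
    ((∀ v ∈ H, MBLap n lam σ T (fun u => ‖u‖ ^ 2) v = 0) ↔ T = 0) := by
  have hσ0 : σ ≠ 0 := ne_of_gt hσ
  have key : ∀ v ∈ H, MBLap n lam σ T (fun u => ‖u‖ ^ 2) v
      = 8 * T - 4 * T * v (Fin.last n) ^ 2 / σ ^ 2 := by
    intro v hv
    rw [hH] at hv
    have hvm : v (Fin.last n) ≠ 0 := ne_of_lt hv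
    have h2 : ∀ i j : Fin (n + 1),
        pD j (pD i (fun u : EuclideanSpace ℝ (Fin (n + 1)) => ‖u‖ ^ 2)) v
          = if j = i then 2 else 0 := by
      intro i j
      have : pD i (fun u : EuclideanSpace ℝ (Fin (n + 1)) => ‖u‖ ^ 2)
          = fun u => 2 * u i := funext (pD_normsq i)
      rw [this, pD_coord]
    unfold MBLap
    simp only [pD_normsq, h2]
    have hne : ∀ i : Fin n, (i.castSucc = Fin.last n) = False := by
      intro i; simp [(Fin.castSucc_lt_last i).ne]
    simp only [eq_self_iff_true, hne, if_true, if_false]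
    have hsum : ∑ i : Fin n, lam i *
        (-2 * v i.castSucc * (2 * v i.castSucc) + v (Fin.last n) ^ 2 * 2
          - 2 * v i.castSucc * v (Fin.last n) * 0)
        = -4 * (∑ i : Fin n, lam i * v i.castSucc ^ 2)
          + 2 * v (Fin.last n) ^ 2 * (∑ i : Fin n, lam i) := by
      rw [Finset.mul_sum, Finset.mul_sum, ← Finset.sum_add_distrib]
      exact Finset.sum_congr rfl fun i _ => by ring
    rw [hsum]
    have hz : σ ^ (-2 : ℤ) = 1 / σ ^ 2 := by
      rw [zpow_neg, zpow_two, one_div, sq]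
    rw [hz]
    field_simp
    ring
  refine ⟨key, ?_, fun h v hv => by rw [key v hv, h]; ring⟩
  intro h
  set v : EuclideanSpace ℝ (Fin (n + 1)) := EuclideanSpace.single (Fin.last n) (-σ) with hvdef
  have hvm : v (Fin.last n) = -σ := by simp [hvdef]
  have hvH : v ∈ H := by rw [hH]; simpa [hvm] using hσ
  have h1 := key v hvH
  have h2 := h v hvH
  rw [h2, hvm] at h1
  have : (0 : ℝ) = 4 * T := by
    rw [h1]; field_simp; ring
  linarith
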